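/- Fix l > 0 and let σ(u,ν) = (l cosh ν cos u, l cosh ν sin u, l sinh ν) parametrize the one-sheeted hyperboloid ℋ_l given by x²+y²−z² = l². Then: (i) the Jacobian Jσ(u,ν) satisfies Jσᵀ · diag(1,1,−1) · Jσ = diag(l² cosh²ν, −l²), i.e. the induced Killing metric is l² cosh²ν du² − l² dν²; and (ii) at (x,y,z) = σ(u,ν), with M(x,y,z) = (1/2)·((z²−y², xy, xz), (xy, z²−x², yz), (xz, yz, x²+y²)), α_u = (−y/(x²+y²), x/(x²+y²), 0) and α_ν = (0, 0, 1/(l cosh ν)), one has α_uᵀMα_u = −1/(2 cosh²ν), α_νᵀMα_ν = 1/2, α_uᵀMα_ν = 0; hence the double bracket metric is τ_db = −2cosh²ν du² + 2dν². -/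

import Mathlib

open Matrix

private lemma jac_aux (l u ν : ℝ) :
    let σ : (Fin 2 → ℝ) → (Fin 3 → ℝ) := fun p =>
      ![l * Real.cosh (p 1) * Real.cos (p 0),
        l * Real.cosh (p 1) * Real.sin (p 0),
        l * Real.sinh (p 1)]
    (Matrix.of fun i j => fderiv ℝ σ ![u, ν] (Pi.single j 1) i) =
      !![-(l * Real.cosh ν * Real.sin u), l * Real.sinh ν * Real.cos u;
         l * Real.cosh ν * Real.cos u, l * Real.sinh ν * Real.sin u;
         0, l * Real.cosh ν] := by
  intro σ
  set pt : Fin 2 → ℝ := ![u, ν] with hpt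
  have h0 : pt 0 = u := rfl
  have h1 : pt 1 = ν := rfl
  set P0 : (Fin 2 → ℝ) →L[ℝ] ℝ := ContinuousLinearMap.proj 0 with hP0
  set P1 : (Fin 2 → ℝ) →L[ℝ] ℝ := ContinuousLinearMap.proj 1 with hP1
  have hp0 : HasFDerivAt (fun p : Fin 2 → ℝ => p 0) P0 pt := hasFDerivAt_apply 0 pt
  have hp1 : HasFDerivAt (fun p : Fin 2 → ℝ => p 1) P1 pt := hasFDerivAt_apply 1 pt
  have hcos : HasFDerivAt (fun p : Fin 2 → ℝ => Real.cos (p 0)) (-(Real.sin u • P0)) pt := by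
    exact (hp0.cos).congr_fderiv (by rw [h0]; exact neg_smul (Real.sin u) P0)
  have hsin : HasFDerivAt (fun p : Fin 2 → ℝ => Real.sin (p 0)) (Real.cos u • P0) pt := by
    simpa [h0] using hp0.sin
  have hlch : HasFDerivAt (fun p : Fin 2 → ℝ => l * Real.cosh (p 1))
      ((l * Real.sinh ν) • P1) pt := by
    simpa [h1, smul_smul] using (hp1.cosh).const_mul l
  have hf0 : HasFDerivAt (fun p : Fin 2 → ℝ => l * Real.cosh (p 1) * Real.cos (p 0))
      ((l * Real.cosh ν) • (-(Real.sin u • P0)) + Real.cos u • ((l * Real.sinh ν) • P1)) pt := by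
    exact (hlch.mul hcos).congr_fderiv (by simp only [h0, h1])
  have hf1 : HasFDerivAt (fun p : Fin 2 → ℝ => l * Real.cosh (p 1) * Real.sin (p 0))
      ((l * Real.cosh ν) • (Real.cos u • P0) + Real.sin u • ((l * Real.sinh ν) • P1)) pt := by
    exact (hlch.mul hsin).congr_fderiv (by simp only [h0, h1])
  have hf2 : HasFDerivAt (fun p : Fin 2 → ℝ => l * Real.sinh (p 1))
      ((l * Real.cosh ν) • P1) pt := by
    simpa [h1, smul_smul] using (hp1.sinh).const_mul l
  set L : Fin 3 → ((Fin 2 → ℝ) →L[ℝ] ℝ) :=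
    ![(l * Real.cosh ν) • (-(Real.sin u • P0)) + Real.cos u • ((l * Real.sinh ν) • P1),
      (l * Real.cosh ν) • (Real.cos u • P0) + Real.sin u • ((l * Real.sinh ν) • P1),
      (l * Real.cosh ν) • P1] with hL
  have hσ : HasFDerivAt σ (ContinuousLinearMap.pi L) pt := by
    apply hasFDerivAt_pi''
    intro i
    fin_cases i
    · simpa [σ, hL] using hf0
    · simpa [σ, hL] using hf1
    · simpa [σ, hL] using hf2
  have hfd : fderiv ℝ σ pt = ContinuousLinearMap.pi L := hσ.fderiv
  ext i j
  rw [Matrix.of_apply, hfd]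
  fin_cases i <;> fin_cases j <;>
    simp [hL, hP0, hP1, Pi.single_apply] <;> ring

/-- For `l > 0` and the parametrization
`σ(u,ν) = (l cosh ν cos u, l cosh ν sin u, l sinh ν)` of the one-sheeted hyperboloid
`ℋ_l : x²+y²−z² = l²`: (i) `Jσᵀ·diag(1,1,−1)·Jσ = diag(l² cosh²ν, −l²)` (induced
Killing metric `l² cosh²ν du² − l² dν²`); (ii) with `M` the co-metric double bracket
tensor matrix and `α_u, α_ν` the differentials of the coordinates,
`α_uᵀMα_u = −1/(2 cosh²ν)`, `α_νᵀMα_ν = 1/2`, `α_uᵀMα_ν = 0`, hence the double bracket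
metric is `−2cosh²ν du² + 2dν²`. -/
theorem sl2_metrics_on_one_sheeted_hyperboloid
    (l u ν : ℝ) (hl : 0 < l) :
    let σ : (Fin 2 → ℝ) → (Fin 3 → ℝ) := fun p =>
      ![l * Real.cosh (p 1) * Real.cos (p 0),
        l * Real.cosh (p 1) * Real.sin (p 0),
        l * Real.sinh (p 1)]
    let Jσ : Matrix (Fin 3) (Fin 2) ℝ :=
      Matrix.of fun i j => fderiv ℝ σ ![u, ν] (Pi.single j 1) i
    let x : ℝ := l * Real.cosh ν * Real.cos u
    let y : ℝ := l * Real.cosh ν * Real.sin u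
    let z : ℝ := l * Real.sinh ν
    let M : Matrix (Fin 3) (Fin 3) ℝ :=
      (1 / 2 : ℝ) •
        !![z ^ 2 - y ^ 2, x * y, x * z;
           x * y, z ^ 2 - x ^ 2, y * z;
           x * z, y * z, x ^ 2 + y ^ 2]
    let αu : Fin 3 → ℝ := ![-y / (x ^ 2 + y ^ 2), x / (x ^ 2 + y ^ 2), 0]
    let αν : Fin 3 → ℝ := ![0, 0, 1 / (l * Real.cosh ν)]
    -- (i) the induced Killing metric is l² cosh²ν du² − l² dν²:
    (Jσᵀ * Matrix.diagonal ![(1 : ℝ), 1, -1] * Jσ =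
        Matrix.diagonal ![l ^ 2 * Real.cosh ν ^ 2, -l ^ 2]) ∧
    -- (ii) the restricted co-metric double bracket tensor:
    (αu ⬝ᵥ M.mulVec αu = -(1 / (2 * Real.cosh ν ^ 2))) ∧
    (αν ⬝ᵥ M.mulVec αν = 1 / 2) ∧
    (αu ⬝ᵥ M.mulVec αν = 0) ∧
    -- hence the double bracket metric is −2cosh²ν du² + 2dν²:
    ((!![αu ⬝ᵥ M.mulVec αu, αu ⬝ᵥ M.mulVec αν;
         αu ⬝ᵥ M.mulVec αν, αν ⬝ᵥ M.mulVec αν] : Matrix (Fin 2) (Fin 2) ℝ)⁻¹ =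
        Matrix.diagonal ![-2 * Real.cosh ν ^ 2, 2]) := by
  intro σ Jσ x y z M αu αν
  have hc : (0 : ℝ) < Real.cosh ν := Real.cosh_pos ν
  have hc0 : Real.cosh ν ≠ 0 := ne_of_gt hc
  have hl0 : l ≠ 0 := ne_of_gt hl
  have hpyth : Real.sin u ^ 2 + Real.cos u ^ 2 = 1 := Real.sin_sq_add_cos_sq u
  have hhyp : Real.cosh ν ^ 2 - Real.sinh ν ^ 2 = 1 := Real.cosh_sq_sub_sinh_sq ν
  have hr : x ^ 2 + y ^ 2 = l ^ 2 * Real.cosh ν ^ 2 := by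
    simp only [x, y]
    nlinarith [hpyth]
  have hr0 : x ^ 2 + y ^ 2 ≠ 0 := by
    rw [hr]; positivity
  have hJ : Jσ = !![-(l * Real.cosh ν * Real.sin u), l * Real.sinh ν * Real.cos u;
         l * Real.cosh ν * Real.cos u, l * Real.sinh ν * Real.sin u;
         0, l * Real.cosh ν] := jac_aux l u ν
  have hi : Jσᵀ * Matrix.diagonal ![(1 : ℝ), 1, -1] * Jσ =
      Matrix.diagonal ![l ^ 2 * Real.cosh ν ^ 2, -l ^ 2] := by
    rw [hJ]
    ext i j
    fin_cases i <;> fin_cases j <;>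
      simp [Matrix.mul_apply, Fin.sum_univ_three, Matrix.diagonal_apply,
        Matrix.vecHead, Matrix.vecTail, Matrix.transpose_apply, Function.comp]
    · linear_combination (l ^ 2 * Real.cosh ν ^ 2) * hpyth
    · ring
    · ring
    · linear_combination (l ^ 2 * Real.sinh ν ^ 2) * hpyth - l ^ 2 * hhyp
  have hz : x ^ 2 + y ^ 2 - z ^ 2 = l ^ 2 := by
    simp only [z]; nlinarith [hhyp, hr]
  clear_value x y z
  have hm : M.mulVec αu = ![l ^ 2 * y / (2 * (x ^ 2 + y ^ 2)),
      -(l ^ 2 * x) / (2 * (x ^ 2 + y ^ 2)), 0] := by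
    funext i
    fin_cases i <;>
      simp only [Matrix.mulVec, dotProduct, Fin.sum_univ_three, M, αu,
        Matrix.smul_apply, Matrix.cons_val', Matrix.cons_val_zero, Matrix.cons_val_one,
        Matrix.head_cons, Matrix.empty_val', Matrix.cons_val_fin_one, Matrix.head_fin_const,
        Matrix.cons_val_two, Matrix.tail_cons, smul_eq_mul, Matrix.cons_val_succ, Fin.zero_eta, Fin.mk_one, Fin.reduceFinMk, Matrix.of_apply] <;>
      field_simp
    · linear_combination y * hz
    · linear_combination (-x) * hz
    · ring
  have huu : αu ⬝ᵥ M.mulVec αu = -(1 / (2 * Real.cosh ν ^ 2)) := by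
    rw [hm]
    simp only [dotProduct, Fin.sum_univ_three, αu, Matrix.cons_val_zero,
      Matrix.cons_val_one, Matrix.head_cons, Matrix.cons_val_two, Matrix.tail_cons]
    rw [hr]
    field_simp
    linear_combination (-1 : ℝ) * hr
  have hνν : αν ⬝ᵥ M.mulVec αν = 1 / 2 := by
    simp only [dotProduct, Matrix.mulVec, Fin.sum_univ_three, M, αν,
      Matrix.smul_apply, Matrix.cons_val', Matrix.cons_val_zero, Matrix.cons_val_one,
      Matrix.head_cons, Matrix.empty_val', Matrix.cons_val_fin_one, Matrix.head_fin_const,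
      Matrix.cons_val_two, Matrix.tail_cons, smul_eq_mul, Matrix.of_apply]
    rw [show x ^ 2 + y ^ 2 = l ^ 2 * Real.cosh ν ^ 2 from hr]
    field_simp
    ring
  have huν : αu ⬝ᵥ M.mulVec αν = 0 := by
    simp only [dotProduct, Matrix.mulVec, Fin.sum_univ_three, M, αu, αν,
      Matrix.smul_apply, Matrix.cons_val', Matrix.cons_val_zero, Matrix.cons_val_one,
      Matrix.head_cons, Matrix.empty_val', Matrix.cons_val_fin_one, Matrix.head_fin_const,
      Matrix.cons_val_two, Matrix.tail_cons, smul_eq_mul, Matrix.of_apply]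
    field_simp
    ring
  refine ⟨hi, huu, hνν, huν, ?_⟩
  rw [huu, hνν, huν]
  apply Matrix.inv_eq_right_inv
  ext i j
  fin_cases i <;> fin_cases j <;>
    simp [Matrix.mul_apply, Fin.sum_univ_two, Matrix.diagonal_apply, Matrix.one_apply] <;>
    field_simp <;> ring
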